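/- Let λ ≥ 0.79 be real and let T be a 2-primitive set of integers greater than 1 such that for every prime p ∈ 𝒫(T) one has Σ_{t∈T, p∣t} t^{−λ} > p^{−λ}. Then the map sending an ordered pair (t, p), with t ∈ T and p a prime dividing t, to the quotient t/p is injective: if t₁/p₁ = t₂/p₂ with t₁, t₂ ∈ T, p₁ prime dividing t₁, p₂ prime dividing t₂, then t₁ = t₂ and p₁ = p₂. -/

import Mathlib

open scoped BigOperators ENNReal

/-- `primesOf A` is the set `𝒫(A)` of primes dividing some member of `A`. -/
def primesOf (A : Set ℕ) : Set ℕ := {p : ℕ | p.Prime ∧ ∃ n ∈ A, p ∣ n}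

/-- A set of integers greater than 1 is *primitive* if no element divides another. -/
def Primitive (A : Set ℕ) : Prop :=
  (∀ n ∈ A, 1 < n) ∧ ∀ a ∈ A, ∀ b ∈ A, a ≠ b → ¬a ∣ b

/-- A set `A` of integers greater than 1 with `|A| ≥ k + 1` is *k-primitive* if no element
divides the product of `k` distinct other elements of `A`. -/
def KPrimitive (k : ℕ) (A : Set ℕ) : Prop :=
  (∀ n ∈ A, 1 < n) ∧ (k : ℕ∞) + 1 ≤ A.encard ∧
    ∀ a ∈ A, ∀ B : Finset ℕ, ↑B ⊆ A \ {a} → B.card = k → ¬a ∣ ∏ b ∈ B, b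

/-- tsum over a subset of a pair is at most the sum of the two values. -/
lemma tsum_le_of_subset_pair (f : ℕ → ℝ≥0∞) {S : Set ℕ} {a b : ℕ} (hab : a ≠ b)
    (hS : S ⊆ {a, b}) : ∑' x : S, f x ≤ f a + f b := by
  have hpair : ∑' x : ({a, b} : Set ℕ), f x = f a + f b := by
    have : ({a, b} : Set ℕ) = (({a, b} : Finset ℕ) : Set ℕ) := by simp
    rw [this, Finset.tsum_subtype', Finset.sum_pair hab]
  calc ∑' x : S, f x = ∑' x, S.indicator f x := tsum_subtype S f
    _ ≤ ∑' x, ({a, b} : Set ℕ).indicator f x :=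
        ENNReal.tsum_le_tsum fun x =>
          Set.indicator_le_indicator_of_subset hS (fun _ => zero_le) x
    _ = ∑' x : ({a, b} : Set ℕ), f x := (tsum_subtype _ f).symm
    _ = f a + f b := hpair

/-- tsum over a subset of a singleton is at most the value. -/
lemma tsum_le_of_subset_singleton (f : ℕ → ℝ≥0∞) {S : Set ℕ} {a : ℕ}
    (hS : S ⊆ {a}) : ∑' x : S, f x ≤ f a := by
  calc ∑' x : S, f x = ∑' x, S.indicator f x := tsum_subtype S f
    _ ≤ ∑' x, ({a} : Set ℕ).indicator f x :=
        ENNReal.tsum_le_tsum fun x =>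
          Set.indicator_le_indicator_of_subset hS (fun _ => zero_le) x
    _ = ∑' x : ({a} : Set ℕ), f x := (tsum_subtype _ f).symm
    _ = f a := tsum_singleton a f

lemma rpow_bound_aux {c x : ℝ} (hc : 0 < c) (hx : 1 ≤ x)
    (hpow : c ^ (100 : ℕ) ≤ x ^ (79 : ℕ)) : x ^ (-(0.79 : ℝ)) ≤ c⁻¹ := by
  have h2 : (c ^ (100 : ℕ) : ℝ) ^ ((1 : ℝ)/100) ≤ ((x : ℝ) ^ (79 : ℕ)) ^ ((1 : ℝ)/100) :=
    Real.rpow_le_rpow (by positivity) hpow (by norm_num)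
  rw [← Real.rpow_natCast c 100, ← Real.rpow_natCast x 79,
    ← Real.rpow_mul hc.le, ← Real.rpow_mul (by linarith)] at h2
  norm_num at h2
  -- h2 : c ≤ x ^ (0.79 : ℝ)
  have hx79 : c ≤ x ^ (0.79 : ℝ) := by
    convert h2 using 2 <;> norm_num
  rw [Real.rpow_neg (by linarith)]
  exact inv_anti₀ hc hx79

lemma key_lt_one {lam : ℝ} (hlam : 0.79 ≤ lam) :
    (2 : ℝ) ^ (-lam) + (3 : ℝ) ^ (-lam) < 1 := by
  have h2 : (2 : ℝ) ^ (-lam) ≤ (2 : ℝ) ^ (-(0.79 : ℝ)) :=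
    Real.rpow_le_rpow_of_exponent_le one_le_two (by linarith)
  have h3 : (3 : ℝ) ^ (-lam) ≤ (3 : ℝ) ^ (-(0.79 : ℝ)) :=
    Real.rpow_le_rpow_of_exponent_le (by norm_num) (by linarith)
  have b2 : (2 : ℝ) ^ (-(0.79 : ℝ)) ≤ ((1729 : ℝ)/1000)⁻¹ :=
    rpow_bound_aux (by norm_num) (by norm_num) (by norm_num)
  have b3 : (3 : ℝ) ^ (-(0.79 : ℝ)) ≤ ((23815 : ℝ)/10000)⁻¹ :=
    rpow_bound_aux (by norm_num) (by norm_num) (by norm_num)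
  have : ((1729 : ℝ)/1000)⁻¹ + ((23815 : ℝ)/10000)⁻¹ < 1 := by norm_num
  linarith

/-- If `T` is 2-primitive, `λ ≥ 0.79`, and `∑_{t ∈ T_p} t^{-λ} > p^{-λ}` for each
`p ∈ 𝒫(T)`, then the map `(t, p) ↦ t/p` (for `t ∈ T` and `p` a prime dividing `t`)
is injective. -/
theorem quotient_map_injective (lam : ℝ) (hlam : 0.79 ≤ lam) (T : Set ℕ)
    (hT : KPrimitive 2 T)
    (h : ∀ p ∈ primesOf T,
      ENNReal.ofReal (((p : ℕ) : ℝ) ^ (-lam)) <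
        ∑' t : {t : ℕ | t ∈ T ∧ p ∣ t}, ENNReal.ofReal (((t : ℕ) : ℝ) ^ (-lam))) :
    ∀ t₁ ∈ T, ∀ t₂ ∈ T, ∀ p₁ p₂ : ℕ, p₁.Prime → p₂.Prime → p₁ ∣ t₁ → p₂ ∣ t₂ →
      t₁ / p₁ = t₂ / p₂ → t₁ = t₂ ∧ p₁ = p₂ := by
  obtain ⟨hgt, -, hprim⟩ := hT
  intro t₁ ht₁ t₂ ht₂ p₁ p₂ hp₁ hp₂ hd₁ hd₂ hquo
  have hlam0 : (0 : ℝ) < lam := lt_of_lt_of_le (by norm_num) hlam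
  have hnl : -lam ≤ 0 := by linarith
  set q := t₁ / p₁ with hqdef
  have e₁ : p₁ * q = t₁ := Nat.mul_div_cancel' hd₁
  have e₂ : p₂ * q = t₂ := by rw [hquo]; exact Nat.mul_div_cancel' hd₂
  have ht₁1 : 1 < t₁ := hgt t₁ ht₁
  have hq0 : 0 < q := by
    rcases Nat.eq_zero_or_pos q with h0 | h0
    · rw [h0, mul_zero] at e₁; omega
    · exact h0
  by_cases hte : t₁ = t₂
  · refine ⟨hte, ?_⟩
    have : p₁ * q = p₂ * q := by rw [e₁, e₂, hte]
    exact Nat.eq_of_mul_eq_mul_right hq0 this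
  exfalso
  have hpe : p₁ ≠ p₂ := fun hpp => hte (by rw [← e₁, ← e₂, hpp])
  by_cases hex : ∃ t₃ ∈ T, p₁ ∣ t₃ ∧ t₃ ≠ t₁ ∧ t₃ ≠ t₂
  · obtain ⟨t₃, ht₃, ⟨s, hs⟩, hne1, hne2⟩ := hex
    refine hprim t₁ ht₁ {t₂, t₃} ?_ ?_ ?_
    · intro x hx
      simp only [Finset.coe_insert, Finset.coe_singleton, Set.mem_insert_iff,
        Set.mem_singleton_iff] at hx
      rcases hx with rfl | rfl
      · exact ⟨ht₂, fun hx => hte (Set.mem_singleton_iff.mp hx).symm⟩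
      · exact ⟨ht₃, fun hx => hne1 (Set.mem_singleton_iff.mp hx)⟩
    · exact Finset.card_pair (Ne.symm hne2)
    · rw [Finset.prod_pair (Ne.symm hne2)]
      exact ⟨p₂ * s, by rw [← e₁, ← e₂, hs]; ring⟩
  push_neg at hex
  have hp₁T : p₁ ∈ primesOf T := ⟨hp₁, t₁, ht₁, hd₁⟩
  refine absurd (h p₁ hp₁T) (not_lt.mpr ?_)
  -- numeric facts
  have hp₁pos : (0 : ℝ) < (p₁ : ℝ) := by exact_mod_cast hp₁.pos
  have hp₂pos : (0 : ℝ) < (p₂ : ℝ) := by exact_mod_cast hp₂.pos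
  have anti : ∀ x y : ℝ, 0 < x → x ≤ y → y ^ (-lam) ≤ x ^ (-lam) := fun x y hx hxy =>
    Real.rpow_le_rpow_of_nonpos hx hxy hnl
  by_cases hp₁2 : p₁ ∣ t₂
  · -- p₁ ∣ t₂, so p₁ ∣ q, hence t₁ ≥ p₁² and t₂ ≥ p₁ p₂
    have hp₁q : p₁ ∣ q := by
      rcases (Nat.Prime.dvd_mul hp₁).mp (e₂ ▸ hp₁2) with hc | hc
      · exact absurd ((Nat.prime_dvd_prime_iff_eq hp₁ hp₂).mp hc) hpe
      · exact hc
    have hqge : p₁ ≤ q := Nat.le_of_dvd hq0 hp₁q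
    have ht₁ge : p₁ * p₁ ≤ t₁ := by calc p₁ * p₁ ≤ p₁ * q := Nat.mul_le_mul_left _ hqge
                                      _ = t₁ := e₁
    have ht₂ge : p₂ * p₁ ≤ t₂ := by calc p₂ * p₁ ≤ p₂ * q := Nat.mul_le_mul_left _ hqge
                                      _ = t₂ := e₂
    have rt₁ : (p₁ : ℝ) * (p₁ : ℝ) ≤ (t₁ : ℝ) := by exact_mod_cast ht₁ge
    have rt₂ : (p₂ : ℝ) * (p₁ : ℝ) ≤ (t₂ : ℝ) := by exact_mod_cast ht₂ge
    have A : ((t₁ : ℝ)) ^ (-lam) ≤ (p₁ : ℝ) ^ (-lam) * (p₁ : ℝ) ^ (-lam) := by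
      calc ((t₁ : ℝ)) ^ (-lam) ≤ ((p₁ : ℝ) * (p₁ : ℝ)) ^ (-lam) :=
            anti _ _ (by positivity) rt₁
        _ = (p₁ : ℝ) ^ (-lam) * (p₁ : ℝ) ^ (-lam) := Real.mul_rpow hp₁pos.le hp₁pos.le
    have B : ((t₂ : ℝ)) ^ (-lam) ≤ (p₁ : ℝ) ^ (-lam) * (p₂ : ℝ) ^ (-lam) := by
      calc ((t₂ : ℝ)) ^ (-lam) ≤ ((p₂ : ℝ) * (p₁ : ℝ)) ^ (-lam) :=
            anti _ _ (by positivity) rt₂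
        _ = (p₂ : ℝ) ^ (-lam) * (p₁ : ℝ) ^ (-lam) := Real.mul_rpow hp₂pos.le hp₁pos.le
        _ = (p₁ : ℝ) ^ (-lam) * (p₂ : ℝ) ^ (-lam) := mul_comm _ _
    have C : (p₁ : ℝ) ^ (-lam) + (p₂ : ℝ) ^ (-lam) ≤
        (2 : ℝ) ^ (-lam) + (3 : ℝ) ^ (-lam) := by
      by_cases hp12 : p₁ = 2
      · have hp23 : 3 ≤ p₂ := by
          have := hp₂.two_le; rcases Nat.lt_or_ge p₂ 3 with hlt | hge
          · exfalso; apply hpe; omega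
          · exact hge
        have c1 : (p₁ : ℝ) ^ (-lam) ≤ (2 : ℝ) ^ (-lam) := by
          apply anti _ _ (by norm_num); exact_mod_cast hp₁.two_le
        have c2 : (p₂ : ℝ) ^ (-lam) ≤ (3 : ℝ) ^ (-lam) := by
          apply anti _ _ (by norm_num); exact_mod_cast hp23
        linarith
      · have hp13 : 3 ≤ p₁ := by have := hp₁.two_le; omega
        have c1 : (p₁ : ℝ) ^ (-lam) ≤ (3 : ℝ) ^ (-lam) := by
          apply anti _ _ (by norm_num); exact_mod_cast hp13
        have c2 : (p₂ : ℝ) ^ (-lam) ≤ (2 : ℝ) ^ (-lam) := by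
          apply anti _ _ (by norm_num); exact_mod_cast hp₂.two_le
        linarith
    have hkey := key_lt_one hlam
    have hP : (0 : ℝ) ≤ (p₁ : ℝ) ^ (-lam) := Real.rpow_nonneg hp₁pos.le _
    have Dsum : ((t₁ : ℝ)) ^ (-lam) + ((t₂ : ℝ)) ^ (-lam) ≤ (p₁ : ℝ) ^ (-lam) := by
      have : ((t₁ : ℝ)) ^ (-lam) + ((t₂ : ℝ)) ^ (-lam) ≤
          (p₁ : ℝ) ^ (-lam) * ((2 : ℝ) ^ (-lam) + (3 : ℝ) ^ (-lam)) := by nlinarith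
      nlinarith
    calc (∑' t : {t : ℕ | t ∈ T ∧ p₁ ∣ t}, ENNReal.ofReal (((t : ℕ) : ℝ) ^ (-lam)))
        ≤ ENNReal.ofReal (((t₁ : ℕ) : ℝ) ^ (-lam)) + ENNReal.ofReal (((t₂ : ℕ) : ℝ) ^ (-lam)) := by
          apply tsum_le_of_subset_pair _ hte
          rintro x ⟨hxT, hxd⟩
          by_cases hx1 : x = t₁
          · exact Or.inl hx1
          · exact Or.inr (hex x hxT hxd hx1)
      _ = ENNReal.ofReal (((t₁ : ℝ)) ^ (-lam) + ((t₂ : ℝ)) ^ (-lam)) :=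
          (ENNReal.ofReal_add (Real.rpow_nonneg (by positivity) _)
            (Real.rpow_nonneg (by positivity) _)).symm
      _ ≤ ENNReal.ofReal (((p₁ : ℕ) : ℝ) ^ (-lam)) := ENNReal.ofReal_le_ofReal Dsum
  · -- ¬ p₁ ∣ t₂ : everything divisible by p₁ equals t₁
    have hsub : {t : ℕ | t ∈ T ∧ p₁ ∣ t} ⊆ {t₁} := by
      rintro x ⟨hxT, hxd⟩
      by_cases hx1 : x = t₁
      · exact hx1
      · exact absurd (hex x hxT hxd hx1 ▸ hxd) hp₁2
    calc (∑' t : {t : ℕ | t ∈ T ∧ p₁ ∣ t}, ENNReal.ofReal (((t : ℕ) : ℝ) ^ (-lam)))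
        ≤ ENNReal.ofReal (((t₁ : ℕ) : ℝ) ^ (-lam)) := tsum_le_of_subset_singleton (fun n => ENNReal.ofReal ((n : ℝ) ^ (-lam))) hsub
      _ ≤ ENNReal.ofReal (((p₁ : ℕ) : ℝ) ^ (-lam)) := by
          apply ENNReal.ofReal_le_ofReal
          apply anti _ _ hp₁pos
          exact_mod_cast Nat.le_of_dvd (by omega) hd₁
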